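/- For λ > 0, x ≥ 0, and 0 ≤ τ < t: ∫₀^∞ [K(x,t,ξ,τ) − K(−x,t,ξ,τ)]·sinh(λξ)dξ = exp(λ²(t−τ))·sinh(λx), where K(x,t,ξ,τ) = (1/(2√(π(t−τ))))·exp(−(x−ξ)²/(4(t−τ))). -/

import Mathlib

open MeasureTheory Real Set

lemma gaussAux (s μ y : ℝ) (hs : 0 < s) :
    Integrable (fun ξ : ℝ => Real.exp (-(y - ξ) ^ 2 / (4 * s) + μ * ξ)) ∧
    (∫ ξ : ℝ, Real.exp (-(y - ξ) ^ 2 / (4 * s) + μ * ξ))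
        = 2 * Real.sqrt (Real.pi * s) * Real.exp (μ ^ 2 * s + μ * y) := by
  have hs' : s ≠ 0 := hs.ne'
  have hsC : (s : ℂ) ≠ 0 := by exact_mod_cast hs'
  set b : ℂ := ((-(1 / (4 * s)) : ℝ) : ℂ) with hb_def
  set c : ℂ := ((y / (2 * s) + μ : ℝ) : ℂ) with hc_def
  set d : ℂ := ((-(y ^ 2) / (4 * s) : ℝ) : ℂ) with hd_def
  have hb : b.re < 0 := by
    rw [hb_def, Complex.ofReal_re]
    have : 0 < 1 / (4 * s) := by positivity
    linarith
  have harg : ∀ ξ : ℝ, b * ξ ^ 2 + c * ξ + d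
      = ((-(y - ξ) ^ 2 / (4 * s) + μ * ξ : ℝ) : ℂ) := by
    intro ξ
    rw [hb_def, hc_def, hd_def]
    push_cast
    field_simp
    ring
  have h1 : (fun ξ : ℝ => ((Real.exp (-(y - ξ) ^ 2 / (4 * s) + μ * ξ) : ℝ) : ℂ))
      = fun ξ : ℝ => Complex.exp (b * ξ ^ 2 + c * ξ + d) := by
    funext ξ; rw [harg ξ, Complex.ofReal_exp]
  constructor
  · have hint := integrable_cexp_quadratic' hb c d
    have h2 : (fun ξ : ℝ => Real.exp (-(y - ξ) ^ 2 / (4 * s) + μ * ξ))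
        = fun ξ : ℝ => (Complex.exp (b * ξ ^ 2 + c * ξ + d)).re := by
      funext ξ; rw [harg ξ, Complex.exp_ofReal_re]
    rw [h2]; exact hint.re
  · have hint := integrable_cexp_quadratic' hb c d
    have key := integral_cexp_quadratic hb c d
    have hπb : (↑Real.pi / -b) = ((4 * Real.pi * s : ℝ) : ℂ) := by
      rw [hb_def]; push_cast; field_simp
    have hpow : ((4 * Real.pi * s : ℝ) : ℂ) ^ (1 / 2 : ℂ)
        = ((2 * Real.sqrt (Real.pi * s) : ℝ) : ℂ) := by
      have h0 : (0 : ℝ) ≤ 4 * Real.pi * s := by positivity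
      rw [show ((1/2 : ℂ)) = ((1/2 : ℝ) : ℂ) by norm_num, ← Complex.ofReal_cpow h0]
      congr 1
      rw [← Real.sqrt_eq_rpow, show 4 * Real.pi * s = 2 ^ 2 * (Real.pi * s) by ring,
        Real.sqrt_mul (by positivity), Real.sqrt_sq (by norm_num)]
    have hd2 : d - c ^ 2 / (4 * b) = ((μ ^ 2 * s + μ * y : ℝ) : ℂ) := by
      rw [hb_def, hc_def, hd_def]
      push_cast
      field_simp
      ring
    have hre : (∫ ξ : ℝ, Complex.exp (b * ξ ^ 2 + c * ξ + d)).re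
        = ∫ ξ : ℝ, Real.exp (-(y - ξ) ^ 2 / (4 * s) + μ * ξ) := by
      rw [← RCLike.re_eq_complex_re, ← integral_re hint]
      congr 1; funext ξ
      rw [RCLike.re_eq_complex_re, harg ξ, Complex.exp_ofReal_re]
    rw [← hre, key, hπb, hpow, hd2, ← Complex.ofReal_exp, ← Complex.ofReal_mul,
      Complex.ofReal_re]

lemma kernAux (s lam y : ℝ) (hs : 0 < s) :
    Integrable (fun ξ : ℝ => Real.exp (-(y - ξ) ^ 2 / (4 * s)) * Real.sinh (lam * ξ)) ∧
    (∫ ξ : ℝ, Real.exp (-(y - ξ) ^ 2 / (4 * s)) * Real.sinh (lam * ξ))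
      = 2 * Real.sqrt (Real.pi * s) * Real.exp (lam ^ 2 * s) * Real.sinh (lam * y) := by
  have h1 := gaussAux s lam y hs
  have h2 := gaussAux s (-lam) y hs
  have hfe : (fun ξ : ℝ => Real.exp (-(y - ξ) ^ 2 / (4 * s)) * Real.sinh (lam * ξ))
      = fun ξ : ℝ => (Real.exp (-(y - ξ) ^ 2 / (4 * s) + lam * ξ)
          - Real.exp (-(y - ξ) ^ 2 / (4 * s) + -lam * ξ)) / 2 := by
    funext ξ
    rw [Real.sinh_eq, Real.exp_add, Real.exp_add, neg_mul]
    ring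
  constructor
  · rw [hfe]; exact (h1.1.sub h2.1).div_const 2
  · rw [hfe, integral_div, integral_sub h1.1 h2.1, h1.2, h2.2,
      show (-lam) ^ 2 * s + -lam * y = lam ^ 2 * s + -(lam * y) by ring,
      Real.exp_add, Real.exp_add, Real.sinh_eq]
    ring

theorem stmt18 (lam x t τ : ℝ) (hlam : 0 < lam) (hx : 0 ≤ x)
    (hτ : 0 ≤ τ) (hτt : τ < t)
    (K : ℝ → ℝ → ℝ → ℝ → ℝ)
    (hK : ∀ y s ξ r : ℝ, K y s ξ r
        = 1 / (2 * Real.sqrt (Real.pi * (s - r))) * Real.exp (-(y - ξ) ^ 2 / (4 * (s - r)))) :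
    ∫ ξ in Set.Ioi (0:ℝ), (K x t ξ τ - K (-x) t ξ τ) * Real.sinh (lam * ξ)
      = Real.exp (lam ^ 2 * (t - τ)) * Real.sinh (lam * x) := by
  set s := t - τ with hs_def
  have hs : 0 < s := sub_pos.mpr hτt
  have hsq : 0 < Real.sqrt (Real.pi * s) := Real.sqrt_pos.mpr (by positivity)
  set F : ℝ → ℝ := fun ξ => (K x t ξ τ - K (-x) t ξ τ) * Real.sinh (lam * ξ) with hF_def
  have hA := kernAux s lam x hs
  have hB := kernAux s lam (-x) hs
  have hfeq : F = fun ξ => 1 / (2 * Real.sqrt (Real.pi * s)) *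
      (Real.exp (-(x - ξ) ^ 2 / (4 * s)) * Real.sinh (lam * ξ)
        - Real.exp (-(-x - ξ) ^ 2 / (4 * s)) * Real.sinh (lam * ξ)) := by
    funext ξ
    rw [hF_def]
    simp only [hK]
    ring
  have hint : Integrable F := by
    rw [hfeq]
    exact (hA.1.sub hB.1).const_mul _
  have hR : ∫ ξ : ℝ, F ξ = Real.exp (lam ^ 2 * s) * (2 * Real.sinh (lam * x)) := by
    rw [hfeq, integral_const_mul, integral_sub hA.1 hB.1, hA.2, hB.2, mul_neg,
      Real.sinh_neg]
    field_simp
    ring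
  have hev : ∀ ξ : ℝ, F (-ξ) = F ξ := by
    intro ξ
    rw [hF_def]
    simp only [hK, mul_neg, Real.sinh_neg,
      show (x - -ξ) = -(-x - ξ) by ring, show (-x - -ξ) = -(x - ξ) by ring, neg_sq]
    ring
  have hIic : ∫ ξ in Iic (0:ℝ), F ξ = ∫ ξ in Ioi (0:ℝ), F ξ := by
    have h0 : ∫ ξ in Iic (0:ℝ), F (-ξ) = ∫ ξ in Ioi (-(0:ℝ)), F ξ :=
      integral_comp_neg_Iic 0 F
    rw [neg_zero] at h0
    rw [← h0]
    exact setIntegral_congr_fun measurableSet_Iic fun ξ _ => (hev ξ).symm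
  have hsplit := intervalIntegral.integral_Iic_add_Ioi (μ := volume) (b := (0:ℝ))
    hint.integrableOn hint.integrableOn
  have : ∫ ξ in Ioi (0:ℝ), F ξ = Real.exp (lam ^ 2 * s) * Real.sinh (lam * x) := by
    rw [hR] at hsplit
    rw [hIic] at hsplit
    linarith
  exact this
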